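/- The map F ↦ M(F) is a bijection from the set ℱ(X,Ω) of decorated planar rooted forests onto the set FM(X,Ω) of forest-representable matrices. -/

import Mathlib

open scoped TensorProduct

universe u v w u'

/-- Decorated planar rooted trees: internal vertices are decorated by `Ω`,
leaves are decorated by `X ⊔ Ω` (a leaf decorated by `ω : Ω` is `node ω []`). -/
inductive PTree (X : Type u) (Ω : Type v) : Type (max u v)
  | leafX : X → PTree X Ω
  | node : Ω → List (PTree X Ω) → PTree X Ω

namespace Moerdijk

variable {X : Type u} {Ω : Type v}

/-- `ℱ(X,Ω)`: decorated planar rooted forests, i.e. the free monoid on decorated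
planar rooted trees under concatenation. -/
abbrev RForest (X : Type u) (Ω : Type v) := FreeMonoid (PTree X Ω)

/-- The single-vertex forest `•ₓ` for `x ∈ X`. -/
def leafF (x : X) : RForest X Ω := FreeMonoid.of (PTree.leafX x)

/-- Grafting of a forest onto a new common root decorated by `ω`. -/
def graft (ω : Ω) (F : RForest X Ω) : RForest X Ω :=
  FreeMonoid.of (PTree.node ω (FreeMonoid.toList F))

mutual
  /-- The list of subtrees of a tree, rooted at its vertices taken in the total
  order `≤_{h,r}` (preorder: roots first, then subtrees from left to right). -/
  def subT : PTree X Ω → List (PTree X Ω)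
    | .leafX x => [.leafX x]
    | .node ω ts => .node ω ts :: subF ts
  /-- The list of subtrees of a forest, rooted at its vertices in the order `≤_{h,r}`. -/
  def subF : List (PTree X Ω) → List (PTree X Ω)
    | [] => []
    | t :: ts => subT t ++ subF ts
end

/-- The vertices of a forest `F`, listed in the total order `≤_{h,r}`, each vertex
being recorded by the subtree it roots. -/
def vlist (F : RForest X Ω) : List (PTree X Ω) := subF (FreeMonoid.toList F)

/-- The number of vertices of a forest. -/
def numV (F : RForest X Ω) : ℕ := (vlist F).length

/-- The decoration of the root of a tree. -/
def rootDec : PTree X Ω → X ⊕ Ω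
  | .leafX x => Sum.inl x
  | .node ω _ => Sum.inr ω

/-- The decoration of the `i`-th vertex (in the order `≤_{h,r}`) of a forest. -/
def decorV (F : RForest X Ω) (i : Fin (numV F)) : X ⊕ Ω := rootDec ((vlist F).get i)

/-- The number of vertices of the subtree rooted at the `i`-th vertex of `F`. -/
def subSize (F : RForest X Ω) (i : Fin (numV F)) : ℕ := (subT ((vlist F).get i)).length

/-- The order `≤_h` on `V(F)`: `i ≤_h j` iff there is an oriented path from `i` to `j`,
edges being oriented from the roots towards the leaves.  In the preorder indexing, the
descendants of `i` are exactly the indices in `[i, i + subSize F i)`. -/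
def leh (F : RForest X Ω) (i j : Fin (numV F)) : Prop :=
  (i : ℕ) ≤ (j : ℕ) ∧ (j : ℕ) < (i : ℕ) + subSize F i

/-- The (reflexive) relation `≤_r` on `V(F)`: `i ≤_r j` iff `i = j`, or `i` and `j` are
not comparable for `≤_h` and `j` lies more to the right than `i` in the planar
representation of `F`. -/
def ler (F : RForest X Ω) (i j : Fin (numV F)) : Prop :=
  i = j ∨ (¬ leh F i j ∧ ¬ leh F j i ∧ i < j)

instance (F : RForest X Ω) (i j : Fin (numV F)) : Decidable (leh F i j) := by
  unfold leh; infer_instance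

/-- The set `V_X(F)` of vertices of `F` decorated by an element of `X`. -/
def VXset (F : RForest X Ω) : Finset (Fin (numV F)) :=
  Finset.univ.filter fun i => (decorV F i).isLeft

mutual
  /-- Restriction of a tree, whose vertices have preorder indices `off, off + 1, …`,
  to the set of vertices selected by `p`: each kept vertex receives an incoming edge
  from its smallest kept ancestor, if any; otherwise it becomes a root. -/
  def restT (p : ℕ → Bool) : PTree X Ω → ℕ → List (PTree X Ω)
    | .leafX x, off => if p off then [.leafX x] else []
    | .node ω ts, off =>
        if p off then [.node ω (restF p ts (off + 1))] else restF p ts (off + 1)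
  /-- Restriction of a forest to the set of vertices selected by `p`. -/
  def restF (p : ℕ → Bool) : List (PTree X Ω) → ℕ → List (PTree X Ω)
    | [], _ => []
    | t :: ts, off => restT p t off ++ restF p ts (off + (subT t).length)
end

/-- The induced subforest `F_I` of a forest `F` on a subset `I ⊆ V(F)`. -/
def indSub (F : RForest X Ω) (I : Finset (Fin (numV F))) : RForest X Ω :=
  FreeMonoid.ofList
    (restF (fun m => decide (∃ i ∈ I, (i : ℕ) = m)) (FreeMonoid.toList F) 0)

/-- The possible entries of the matrix of a forest: `0`, `=`, `h` and `r`. -/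
inductive MEntry : Type
  | zero | eq | h | r
deriving DecidableEq

/-- A matrix with `n` rows (indexed `1,…,n`) and `n + 1` columns (indexed `0,…,n`):
the column `0` has entries in `X ⊔ Ω` and the other entries are among `0, =, h, r`. -/
structure FMat (X : Type u) (Ω : Type v) : Type (max u v) where
  n : ℕ
  dec : Fin n → X ⊕ Ω
  rel : Fin n → Fin n → MEntry

/-- Forest-representable matrices, conditions (a)–(f). -/
def IsFR (A : FMat X Ω) : Prop :=
  (∀ i j : Fin A.n, j < i → A.rel i j = .zero) ∧
  (∀ i : Fin A.n, A.rel i i = .eq) ∧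
  (∀ i j : Fin A.n, i < j → A.rel i j = .h ∨ A.rel i j = .r) ∧
  (∀ i j : Fin A.n, i < j → (A.dec i).isLeft → A.rel i j = .r) ∧
  (∀ i j l : Fin A.n, i < j → j < l →
    (A.rel i j, A.rel i l, A.rel j l) ∈
      ([(.r, .r, .r), (.h, .h, .h), (.r, .r, .h), (.h, .h, .r), (.h, .r, .r)] :
        List (MEntry × MEntry × MEntry)))

/-- The matrix `M(F)` of a decorated planar rooted forest `F`. -/
def Mmat (F : RForest X Ω) : FMat X Ω where
  n := numV F
  dec := decorV F
  rel := fun i j =>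
    if i < j then (if leh F i j then .h else .r)
    else if i = j then .eq else .zero


/-! ### Auxiliary development -/

lemma subT_leafX (x : X) : subT (Ω := Ω) (.leafX x) = [.leafX x] := by rw [subT]

lemma subT_node (ω : Ω) (ts : List (PTree X Ω)) :
    subT (.node ω ts) = .node ω ts :: subF ts := by rw [subT]

lemma subF_nil : subF ([] : List (PTree X Ω)) = [] := by rw [subF]

lemma subF_cons (t : PTree X Ω) (ts : List (PTree X Ω)) :
    subF (t :: ts) = subT t ++ subF ts := by rw [subF]

lemma szT_pos (t : PTree X Ω) : 1 ≤ (subT t).length := by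
  cases t <;> simp [subT_leafX, subT_node]

/-- sizes of the subtrees rooted at the vertices of a forest, in preorder -/
def szF (l : List (PTree X Ω)) : List ℕ := (subF l).map fun t => (subT t).length

/-- decorations of the vertices of a forest, in preorder -/
def dcF (l : List (PTree X Ω)) : List (X ⊕ Ω) := (subF l).map rootDec

@[simp] lemma szF_length (l : List (PTree X Ω)) : (szF l).length = (subF l).length := by
  simp [szF]

@[simp] lemma dcF_length (l : List (PTree X Ω)) : (dcF l).length = (subF l).length := by
  simp [dcF]

lemma szF_nil : szF ([] : List (PTree X Ω)) = [] := by simp [szF, subF_nil]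

lemma szF_cons_leaf (x : X) (ts : List (PTree X Ω)) :
    szF (.leafX x :: ts) = 1 :: szF ts := by
  simp [szF, subF_cons, subT_leafX]

lemma szF_cons_node (ω : Ω) (us ts : List (PTree X Ω)) :
    szF (.node ω us :: ts) = ((szF us).length + 1) :: (szF us ++ szF ts) := by
  simp [szF, subF_cons, subT_node, Nat.add_comm]

lemma dcF_nil : dcF ([] : List (PTree X Ω)) = [] := by simp [dcF, subF_nil]

lemma dcF_cons_leaf (x : X) (ts : List (PTree X Ω)) :
    dcF (.leafX x :: ts) = Sum.inl x :: dcF ts := by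
  simp [dcF, subF_cons, subT_leafX, rootDec]

lemma dcF_cons_node (ω : Ω) (us ts : List (PTree X Ω)) :
    dcF (.node ω us :: ts) = Sum.inr ω :: (dcF us ++ dcF ts) := by
  simp [dcF, subF_cons, subT_node, rootDec]

/-- A list of sizes is *good* if each size is positive, the corresponding interval
stays inside the list, and the intervals are nested. -/
structure GoodS (s : List ℕ) : Prop where
  pos : ∀ i, i < s.length → 1 ≤ s.getD i 0
  bound : ∀ i, i < s.length → i + s.getD i 0 ≤ s.length
  nest : ∀ i j, i ≤ j → j < i + s.getD i 0 → j + s.getD j 0 ≤ i + s.getD i 0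

lemma goodS_nil : GoodS ([] : List ℕ) := by
  constructor <;> intro i <;> simp <;> omega

lemma goodS_cons (a b : List ℕ) (ha : GoodS a) (hb : GoodS b) :
    GoodS ((a.length + 1) :: (a ++ b)) := by
  set s : List ℕ := (a.length + 1) :: (a ++ b) with hs
  have hlen : s.length = a.length + 1 + b.length := by simp [hs]; omega
  have hg0 : s.getD 0 0 = a.length + 1 := rfl
  have hga : ∀ i, 1 ≤ i → i ≤ a.length → s.getD i 0 = a.getD (i - 1) 0 := by
    intro i h1 h2
    obtain ⟨k, rfl⟩ : ∃ k, i = k + 1 := ⟨i - 1, by omega⟩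
    simp only [hs, List.getD_cons_succ]
    rw [List.getD_append _ _ _ _ (by omega)]
    simp
  have hgb : ∀ i, a.length + 1 ≤ i → s.getD i 0 = b.getD (i - (a.length + 1)) 0 := by
    intro i h1
    obtain ⟨k, rfl⟩ : ∃ k, i = k + 1 := ⟨i - 1, by omega⟩
    simp only [hs, List.getD_cons_succ]
    rw [List.getD_append_right _ _ _ _ (by omega)]
    congr 1
    omega
  have bnd : ∀ i, i < s.length → i + s.getD i 0 ≤ s.length := by
    intro i hi
    rcases Nat.eq_zero_or_pos i with rfl | hi1
    · rw [hg0]; omega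
    rcases le_or_gt i a.length with h2 | h2
    · rw [hga i hi1 h2]
      have := ha.bound (i - 1) (by omega)
      omega
    · rw [hgb i (by omega)]
      have := hb.bound (i - (a.length + 1)) (by omega)
      omega
  refine ⟨?_, bnd, ?_⟩
  · intro i hi
    rcases Nat.eq_zero_or_pos i with rfl | hi1
    · rw [hg0]; omega
    rcases le_or_gt i a.length with h2 | h2
    · rw [hga i hi1 h2]; exact ha.pos (i - 1) (by omega)
    · rw [hgb i (by omega)]
      exact hb.pos (i - (a.length + 1)) (by omega)
  · intro i j hij hj
    rcases eq_or_lt_of_le hij with rfl | hij'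
    · omega
    -- i < j, so s.getD i 0 ≥ 2 ⇒ i in range
    have hilen : i < s.length := by
      by_contra h
      have : s.getD i 0 = 0 := List.getD_eq_default _ _ (by omega)
      omega
    have hjlen : j < s.length := by
      have := bnd i hilen; omega
    rcases Nat.eq_zero_or_pos i with rfl | hi1
    · -- i = 0 : need j + s j ≤ a.length + 1
      rw [hg0] at hj ⊢
      have hja : j - 1 < a.length := by omega
      rw [hga j (by omega) (by omega)]
      have := ha.bound (j - 1) hja
      omega
    rcases le_or_gt i a.length with h2 | h2
    · -- i in the a-region; then j is too
      have hia := ha.bound (i - 1) (by omega)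
      rw [hga i hi1 h2] at hj ⊢
      have hj2 : j ≤ a.length := by omega
      rw [hga j (by omega) hj2]
      have := ha.nest (i - 1) (j - 1) (by omega) (by omega)
      omega
    · -- i in the b-region
      rw [hgb i (by omega)] at hj ⊢
      rw [hgb j (by omega)]
      have := hb.nest (i - (a.length + 1)) (j - (a.length + 1)) (by omega) (by omega)
      omega


lemma subF_cons_length (t : PTree X Ω) (ts : List (PTree X Ω)) :
    (subF (t :: ts)).length = (subT t).length + (subF ts).length := by
  simp [subF_cons]

lemma subT_node_length (ω : Ω) (us : List (PTree X Ω)) :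
    (subT (.node ω us)).length = (subF us).length + 1 := by
  simp [subT_node]

lemma goodS_szF_aux : ∀ n (l : List (PTree X Ω)), (subF l).length ≤ n → GoodS (szF l)
  | n, [] => fun _ => by rw [szF_nil]; exact goodS_nil
  | 0, t :: ts => fun h => by
      exfalso
      have h1 := szT_pos t
      rw [subF_cons_length] at h
      omega
  | n + 1, .leafX x :: ts => fun h => by
      rw [szF_cons_leaf]
      have h1 : (subF ts).length ≤ n := by
        rw [subF_cons_length, subT_leafX] at h; simp at h; omega
      have := goodS_szF_aux n ts h1
      have h2 := goodS_cons [] (szF ts) goodS_nil this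
      simpa using h2
  | n + 1, .node ω us :: ts => fun h => by
      rw [szF_cons_node]
      rw [subF_cons_length, subT_node_length] at h
      exact goodS_cons _ _ (goodS_szF_aux n us (by omega)) (goodS_szF_aux n ts (by omega))

lemma goodS_szF (l : List (PTree X Ω)) : GoodS (szF l) := goodS_szF_aux _ l le_rfl

lemma numV_eq (F : RForest X Ω) : numV F = (szF (FreeMonoid.toList F)).length := by
  simp [numV, vlist, szF]

lemma subSize_eq (F : RForest X Ω) (i : Fin (numV F)) :
    subSize F i = (szF (FreeMonoid.toList F)).getD (i : ℕ) 0 := by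
  have hi : (i : ℕ) < (szF (FreeMonoid.toList F)).length := by rw [← numV_eq]; exact i.2
  rw [List.getD_eq_getElem _ _ hi]
  simp [szF, subSize, vlist, List.get_eq_getElem]; rfl

lemma subSize_pos (F : RForest X Ω) (i : Fin (numV F)) : 1 ≤ subSize F i :=
  szT_pos _

lemma subSize_bound (F : RForest X Ω) (i : Fin (numV F)) :
    (i : ℕ) + subSize F i ≤ numV F := by
  rw [subSize_eq]
  exact ((goodS_szF _).bound _ (by rw [← numV_eq]; exact i.2)).trans_eq (numV_eq F).symm

lemma subSize_nest (F : RForest X Ω) (i j : Fin (numV F)) (hij : (i : ℕ) ≤ j)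
    (h : (j : ℕ) < (i : ℕ) + subSize F i) :
    (j : ℕ) + subSize F j ≤ (i : ℕ) + subSize F i := by
  rw [subSize_eq, subSize_eq]
  rw [subSize_eq] at h
  exact (goodS_szF _).nest _ _ hij h

lemma leh_iff (F : RForest X Ω) (i j : Fin (numV F)) (hij : (i : ℕ) ≤ j) :
    leh F i j ↔ (j : ℕ) < (i : ℕ) + subSize F i := by
  simp [leh, hij]

lemma rel_lt (F : RForest X Ω) (i j : Fin (numV F)) (hij : i < j) :
    (Mmat F).rel i j = if (j : ℕ) < (i : ℕ) + subSize F i then .h else .r := by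
  have h1 : leh F i j ↔ (j : ℕ) < (i : ℕ) + subSize F i := leh_iff F i j hij.le
  simp only [Mmat, if_pos hij]
  by_cases h : (j : ℕ) < (i : ℕ) + subSize F i
  · rw [if_pos (h1.mpr h), if_pos h]
  · rw [if_neg (fun hh => h (h1.mp hh)), if_neg h]

lemma isLeft_subSize (F : RForest X Ω) (i : Fin (numV F))
    (h : (decorV F i).isLeft) : subSize F i = 1 := by
  unfold decorV at h
  unfold subSize
  cases hv : (vlist F).get i with
  | leafX x => rw [subT_leafX]; rfl
  | node ω ts => rw [hv] at h; simp [rootDec] at h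

theorem isFR_Mmat (F : RForest X Ω) : IsFR (Mmat F) := by
  refine ⟨?_, ?_, ?_, ?_, ?_⟩
  · intro i j hji
    have h1 : ¬ i < j := not_lt.mpr hji.le
    have h2 : ¬ i = j := by rintro rfl; exact absurd hji (lt_irrefl _)
    exact (if_neg h1).trans (if_neg h2)
  · intro i
    exact (if_neg (lt_irrefl i)).trans (if_pos rfl)
  · intro i j hij
    rw [rel_lt F i j hij]
    by_cases h : (j : ℕ) < (i : ℕ) + subSize F i
    · left; rw [if_pos h]
    · right; rw [if_neg h]
  · intro i j hij hleft
    rw [rel_lt F i j hij, if_neg]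
    rw [isLeft_subSize F i hleft]
    have := hij
    rw [Fin.lt_def] at this
    omega
  · intro i j k hij hjk
    have hij' : (i : ℕ) < j := hij
    have hjk' : (j : ℕ) < k := hjk
    rw [rel_lt F i j hij, rel_lt F i k (hij.trans hjk), rel_lt F j k hjk]
    have hn1 : (j : ℕ) < (i : ℕ) + subSize F i →
        (j : ℕ) + subSize F j ≤ (i : ℕ) + subSize F i :=
      subSize_nest F i j (le_of_lt hij')
    by_cases H1 : (j : ℕ) < (i : ℕ) + subSize F i <;>
      by_cases H2 : (k : ℕ) < (i : ℕ) + subSize F i <;>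
        by_cases H3 : (k : ℕ) < (j : ℕ) + subSize F j <;>
          simp [H1, H2, H3] <;> first | omega | (have hE := hn1 H1; omega)


/-- Build a forest from decoration and size data, for the block of `n` vertices
starting at preorder index `off`. -/
def buildF (d : ℕ → X ⊕ Ω) (s : ℕ → ℕ) : ℕ → ℕ → List (PTree X Ω)
  | _, 0 => []
  | off, n + 1 =>
    (match d off with
      | Sum.inl x => PTree.leafX x
      | Sum.inr ω => PTree.node ω (buildF d s (off + 1) (min (max (s off) 1) (n + 1) - 1))) ::
      buildF d s (off + min (max (s off) 1) (n + 1)) (n + 1 - min (max (s off) 1) (n + 1))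
  termination_by _ n => n
  decreasing_by all_goals omega

@[simp] lemma buildF_zero (d : ℕ → X ⊕ Ω) (s : ℕ → ℕ) (off : ℕ) :
    buildF d s off 0 = [] := by rw [buildF]

lemma buildF_succ (d : ℕ → X ⊕ Ω) (s : ℕ → ℕ) (off n : ℕ)
    (h1 : 1 ≤ s off) (h2 : s off ≤ n + 1) :
    buildF d s off (n + 1) =
      (match d off with
        | Sum.inl x => PTree.leafX x
        | Sum.inr ω => PTree.node ω (buildF d s (off + 1) (s off - 1))) ::
        buildF d s (off + s off) (n + 1 - s off) := by
  have hm : min (max (s off) 1) (n + 1) = s off := by omega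
  rw [buildF, hm]

lemma range_one' : List.range 1 = [0] := by simp [List.range_succ]

lemma range_map_split {α : Type w} (f : ℕ → α) (off σ n : ℕ)
    (h1 : 1 ≤ σ) (h2 : σ ≤ n + 1) :
    (List.range (n + 1)).map (fun k => f (off + k)) =
      f off :: (((List.range (σ - 1)).map (fun k => f (off + 1 + k))) ++
        ((List.range (n + 1 - σ)).map (fun k => f (off + σ + k)))) := by
  have hn : n + 1 = 1 + (σ - 1) + (n + 1 - σ) := by omega
  conv_lhs => rw [hn, List.range_add, List.range_add]
  simp only [List.map_append, List.map_map, Function.comp_def, range_one', List.map_cons,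
    List.map_nil, List.cons_append, List.nil_append, List.append_assoc, Nat.add_zero]
  congr 2
  all_goals (apply List.map_congr_left; intro a _; congr 1; omega)

lemma build_spec : ∀ fuel n (d : ℕ → X ⊕ Ω) (s : ℕ → ℕ) (off : ℕ), n ≤ fuel →
    (∀ k, k < n → 1 ≤ s (off + k)) →
    (∀ k, k < n → k + s (off + k) ≤ n) →
    (∀ k j, k < n → k ≤ j → j < k + s (off + k) → j + s (off + j) ≤ k + s (off + k)) →
    (∀ k, k < n → (d (off + k)).isLeft → s (off + k) = 1) →
    szF (buildF d s off n) = (List.range n).map (fun k => s (off + k)) ∧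
      dcF (buildF d s off n) = (List.range n).map (fun k => d (off + k))
  | fuel, 0, d, s, off => fun _ _ _ _ _ => by simp [szF_nil, dcF_nil]
  | 0, n + 1, d, s, off => fun h _ _ _ _ => by omega
  | fuel + 1, n + 1, d, s, off => fun hf hpos hbnd hnest hleaf => by
    have h1 : 1 ≤ s off := by have := hpos 0 (by omega); simpa using this
    have h2 : s off ≤ n + 1 := by have := hbnd 0 (by omega); simpa using this
    rw [buildF_succ d s off n h1 h2]
    have hrest := build_spec fuel (n + 1 - s off) d s (off + s off) (by omega)
      (fun k hk => by
        have e1 : off + s off + k = off + (s off + k) := by omega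
        rw [e1]; exact hpos (s off + k) (by omega))
      (fun k hk => by
        have e1 : off + s off + k = off + (s off + k) := by omega
        have := hbnd (s off + k) (by omega)
        rw [e1]; omega)
      (fun k j hk hkj hj => by
        have e1 : off + s off + k = off + (s off + k) := by omega
        have e2 : off + s off + j = off + (s off + j) := by omega
        rw [e1] at hj
        have := hnest (s off + k) (s off + j) (by omega) (by omega) (by omega)
        rw [e1, e2]; omega)
      (fun k hk hl => by
        have e1 : off + s off + k = off + (s off + k) := by omega
        rw [e1] at hl ⊢
        exact hleaf (s off + k) (by omega) hl)
    cases hd : d off with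
    | inl x =>
      have hσ1 : s off = 1 := by
        have := hleaf 0 (by omega)
        simp only [Nat.add_zero] at this
        exact this (by rw [hd]; rfl)
      simp only []
      rw [szF_cons_leaf, dcF_cons_leaf,
          range_map_split s off (s off) n h1 h2, range_map_split d off (s off) n h1 h2]
      rw [hrest.1, hrest.2, hd, hσ1]
      simp only [Nat.sub_self, List.range_zero, List.map_nil, List.nil_append]
      exact ⟨by trivial, by trivial⟩
    | inr ω =>
      have hinner := build_spec fuel (s off - 1) d s (off + 1) (by omega)
        (fun k hk => by
          have e1 : off + 1 + k = off + (k + 1) := by omega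
          rw [e1]; exact hpos (k + 1) (by omega))
        (fun k hk => by
          have e1 : off + 1 + k = off + (k + 1) := by omega
          have h0 := hnest 0 (k + 1) (by omega) (by omega)
            (by simp only [Nat.add_zero]; omega)
          simp only [Nat.add_zero] at h0
          rw [e1]; omega)
        (fun k j hk hkj hj => by
          have e1 : off + 1 + k = off + (k + 1) := by omega
          have e2 : off + 1 + j = off + (j + 1) := by omega
          rw [e1] at hj
          have := hnest (k + 1) (j + 1) (by omega) (by omega) (by omega)
          rw [e1, e2]; omega)
        (fun k hk hl => by
          have e1 : off + 1 + k = off + (k + 1) := by omega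
          rw [e1] at hl ⊢
          exact hleaf (k + 1) (by omega) hl)
      simp only []
      rw [szF_cons_node, dcF_cons_node]
      rw [range_map_split s off (s off) n h1 h2, range_map_split d off (s off) n h1 h2]
      rw [hrest.1, hrest.2, hinner.1, hinner.2]
      refine ⟨?_, ?_⟩
      · congr 1
        simp only [List.length_map, List.length_range]
        omega
      · rw [hd]


lemma build_reconstruct : ∀ fuel (l : List (PTree X Ω)) (d : ℕ → X ⊕ Ω) (s : ℕ → ℕ) (off : ℕ),
    (subF l).length ≤ fuel →
    (∀ k (hk : k < (subF l).length), d (off + k) = rootDec ((subF l)[k])) →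
    (∀ k (hk : k < (subF l).length), s (off + k) = (subT ((subF l)[k])).length) →
    buildF d s off (subF l).length = l
  | fuel, [], d, s, off => fun _ _ _ => by rw [subF_nil]; simp
  | 0, t :: ts, d, s, off => fun h _ _ => by
      have := szT_pos t
      rw [subF_cons_length] at h
      omega
  | fuel + 1, .leafX x :: ts, d, s, off => fun hfuel hd hs => by
      have hsf : subF (PTree.leafX x :: ts) = PTree.leafX x :: subF ts := by
        rw [subF_cons, subT_leafX, List.singleton_append]
      rw [hsf] at hd hs hfuel ⊢
      have hd0 : d off = Sum.inl x := by
        have := hd 0 (by simp)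
        simpa [rootDec] using this
      have hs0 : s off = 1 := by
        have := hs 0 (by simp)
        simpa [subT_leafX] using this
      have hlen : (PTree.leafX x :: subF ts).length = (subF ts).length + 1 := by simp
      rw [hlen]
      rw [buildF_succ d s off (subF ts).length (by omega) (by omega)]
      rw [hd0, hs0]
      simp only [Nat.add_sub_cancel]
      have hfuel' : (subF ts).length ≤ fuel := by
        simp only [List.length_cons] at hfuel; omega
      congr 1
      exact build_reconstruct fuel ts d s (off + 1) hfuel'
        (fun k hk => by
          have e1 : off + 1 + k = off + (k + 1) := by omega
          have := hd (k + 1) (by simp; omega)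
          rw [List.getElem_cons_succ] at this
          rw [e1, this])
        (fun k hk => by
          have e1 : off + 1 + k = off + (k + 1) := by omega
          have := hs (k + 1) (by simp; omega)
          rw [List.getElem_cons_succ] at this
          rw [e1, this])
  | fuel + 1, .node ω us :: ts, d, s, off => fun hfuel hd hs => by
      have hsf : subF (PTree.node ω us :: ts) =
          PTree.node ω us :: (subF us ++ subF ts) := by
        rw [subF_cons, subT_node, List.cons_append]
      rw [hsf] at hd hs hfuel ⊢
      have hd0 : d off = Sum.inr ω := by
        have := hd 0 (by simp)
        simpa [rootDec] using this
      have hs0 : s off = (subF us).length + 1 := by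
        have := hs 0 (by simp)
        simpa [subT_node] using this
      have hlen : (PTree.node ω us :: (subF us ++ subF ts)).length =
          ((subF us).length + (subF ts).length) + 1 := by simp
      rw [hlen]
      rw [buildF_succ d s off ((subF us).length + (subF ts).length) (by omega) (by omega)]
      rw [hd0, hs0]
      have e2 : (subF us).length + 1 - 1 = (subF us).length := by omega
      have e3 : (subF us).length + (subF ts).length + 1 - ((subF us).length + 1)
          = (subF ts).length := by omega
      rw [e2, e3]
      have hgetIn : ∀ k (hk : k < (subF us).length),
          (PTree.node ω us :: (subF us ++ subF ts))[k + 1]'(by simp; omega) = (subF us)[k] := by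
        intro k hk
        rw [List.getElem_cons_succ]
        exact List.getElem_append_left hk
      have hgetOut : ∀ k (hk : k < (subF ts).length),
          (PTree.node ω us :: (subF us ++ subF ts))[((subF us).length + k) + 1]'(by simp; omega)
            = (subF ts)[k] := by
        intro k hk
        rw [List.getElem_cons_succ]
        rw [List.getElem_append_right (by omega)]
        congr 1
        omega
      have hfuel1 : (subF us).length ≤ fuel := by
        simp only [List.length_cons, List.length_append] at hfuel; omega
      have hfuel2 : (subF ts).length ≤ fuel := by
        simp only [List.length_cons, List.length_append] at hfuel; omega
      congr 1
      · exact congrArg (PTree.node ω) (build_reconstruct fuel us d s (off + 1) hfuel1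
          (fun k hk => by
            have e1 : off + 1 + k = off + (k + 1) := by omega
            have := hd (k + 1) (by simp; omega)
            rw [hgetIn k hk] at this
            rw [e1, this])
          (fun k hk => by
            have e1 : off + 1 + k = off + (k + 1) := by omega
            have := hs (k + 1) (by simp; omega)
            rw [hgetIn k hk] at this
            rw [e1, this]))
      · exact build_reconstruct fuel ts d s (off + ((subF us).length + 1)) hfuel2
          (fun k hk => by
            have e1 : off + ((subF us).length + 1) + k
                = off + ((subF us).length + 1 + k) := by omega
            have := hd (((subF us).length + k) + 1) (by simp; omega)
            rw [hgetOut k hk] at this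
            rw [e1]
            rw [show off + ((subF us).length + 1 + k) = off + ((subF us).length + k + 1) from by omega]
            rw [this])
          (fun k hk => by
            have e1 : off + ((subF us).length + 1) + k
                = off + ((subF us).length + 1 + k) := by omega
            have := hs (((subF us).length + k) + 1) (by simp; omega)
            rw [hgetOut k hk] at this
            rw [e1]
            rw [show off + ((subF us).length + 1 + k) = off + ((subF us).length + k + 1) from by omega]
            rw [this])


/-- The relation entries of a matrix, extended to all natural number indices. -/
def relN (A : FMat X Ω) (i j : ℕ) : MEntry :=
  if h : i < A.n ∧ j < A.n then A.rel ⟨i, h.1⟩ ⟨j, h.2⟩ else .zero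

lemma relN_lt (A : FMat X Ω) {i j : ℕ} (h1 : i < A.n) (h2 : j < A.n) :
    relN A i j = A.rel ⟨i, h1⟩ ⟨j, h2⟩ := dif_pos ⟨h1, h2⟩

lemma sOf_exists (A : FMat X Ω) (i : ℕ) :
    ∃ j, i < j ∧ (A.n ≤ j ∨ relN A i j = .r) :=
  ⟨A.n + i + 1, by omega, Or.inl (by omega)⟩

/-- `i +` the number of vertices of the subtree rooted at `i`, read off from a matrix. -/
def eOf (A : FMat X Ω) (i : ℕ) : ℕ := Nat.find (sOf_exists A i)

/-- The number of vertices of the subtree rooted at `i`, read off from a matrix. -/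
def sOf (A : FMat X Ω) (i : ℕ) : ℕ := eOf A i - i

lemma eOf_gt (A : FMat X Ω) (i : ℕ) : i < eOf A i := (Nat.find_spec (sOf_exists A i)).1

lemma sOf_pos (A : FMat X Ω) (i : ℕ) : 1 ≤ sOf A i := by
  have := eOf_gt A i; unfold sOf; omega

lemma add_sOf (A : FMat X Ω) (i : ℕ) : i + sOf A i = eOf A i := by
  have := eOf_gt A i; unfold sOf; omega

lemma eOf_le (A : FMat X Ω) {i : ℕ} (hi : i < A.n) : eOf A i ≤ A.n :=
  Nat.find_le ⟨hi, Or.inl le_rfl⟩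

lemma relN_eq_h (A : FMat X Ω) (hFR : IsFR A) {i j : ℕ} (hi : i < A.n)
    (hij : i < j) (hje : j < eOf A i) : relN A i j = .h := by
  have hmin := Nat.find_min (sOf_exists A i) hje
  push_neg at hmin
  have h2 := hmin hij
  have hj : j < A.n := by omega
  rw [relN_lt A hi hj] at h2 ⊢
  rcases hFR.2.2.1 ⟨i, hi⟩ ⟨j, hj⟩ hij with h | h
  · exact h
  · exact absurd h h2.2

lemma relN_eq_r (A : FMat X Ω) (hFR : IsFR A) {i j : ℕ} (hi : i < A.n)
    (hij : i < j) (hj : j < A.n) (hje : eOf A i ≤ j) : relN A i j = .r := by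
  rcases eq_or_lt_of_le hje with he | he
  · have := (Nat.find_spec (sOf_exists A i)).2
    rw [show Nat.find (sOf_exists A i) = eOf A i from rfl, he] at this
    rcases this with h | h
    · omega
    · exact h
  · -- eOf A i < j ; use condition (f) with the triple (i, eOf A i, j)
    set m := eOf A i with hm
    have him : i < m := eOf_gt A i
    have hmn : m < A.n := by omega
    have h1 : relN A i m = .r := by
      rcases (Nat.find_spec (sOf_exists A i)).2 with h | h
      · rw [show Nat.find (sOf_exists A i) = m from rfl] at h; omega
      · exact h
    rw [relN_lt A hi hj]
    rcases hFR.2.2.1 ⟨i, hi⟩ ⟨j, hj⟩ hij with h | h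
    · exfalso
      have h' : relN A i j = .h := by rw [relN_lt A hi hj]; exact h
      have hmem := hFR.2.2.2.2 ⟨i, hi⟩ ⟨m, hmn⟩ ⟨j, hj⟩ him he
      rw [← relN_lt A hi hmn, h1, ← relN_lt A hi hj, h'] at hmem
      simp at hmem
    · exact h

lemma rel_char (A : FMat X Ω) (hFR : IsFR A) {i j : ℕ} (hi : i < A.n) (hj : j < A.n)
    (hij : i < j) :
    A.rel ⟨i, hi⟩ ⟨j, hj⟩ = if j < i + sOf A i then .h else .r := by
  rw [add_sOf]
  by_cases h : j < eOf A i
  · rw [if_pos h, ← relN_lt A hi hj]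
    exact relN_eq_h A hFR hi hij h
  · rw [if_neg h, ← relN_lt A hi hj]
    exact relN_eq_r A hFR hi hij hj (by omega)

lemma sOf_bound (A : FMat X Ω) {k : ℕ} (hk : k < A.n) : k + sOf A k ≤ A.n := by
  rw [add_sOf]; exact eOf_le A hk

lemma sOf_nest (A : FMat X Ω) (hFR : IsFR A) {k j : ℕ} (hk : k < A.n) (hkj : k ≤ j)
    (hj : j < k + sOf A k) : j + sOf A j ≤ k + sOf A k := by
  rcases eq_or_lt_of_le hkj with rfl | hkj'
  · omega
  rw [add_sOf] at hj ⊢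
  have hjn : j < A.n := by have := eOf_le A hk; omega
  rw [add_sOf]
  by_contra hcon
  push_neg at hcon
  -- eOf A k < eOf A j
  have hekn : eOf A k ≤ A.n := eOf_le A hk
  have hejn : eOf A j ≤ A.n := eOf_le A hjn
  have hekn' : eOf A k < A.n := by omega
  set m := eOf A k with hm
  have h1 : relN A k j = .h := relN_eq_h A hFR hk hkj' hj
  have h2 : relN A k m = .r := relN_eq_r A hFR hk (by omega) hekn' (by omega)
  have h3 : relN A j m = .h := relN_eq_h A hFR hjn (by omega) (by omega)
  have hmem := hFR.2.2.2.2 ⟨k, hk⟩ ⟨j, hjn⟩ ⟨m, hekn'⟩ hkj' (by show j < m; omega)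
  rw [← relN_lt A hk hjn, h1, ← relN_lt A hk hekn', h2, ← relN_lt A hjn hekn', h3] at hmem
  simp at hmem

lemma sOf_leaf (A : FMat X Ω) (hFR : IsFR A) {k : ℕ} (hk : k < A.n)
    (hl : (A.dec ⟨k, hk⟩).isLeft) : sOf A k = 1 := by
  have h1 : eOf A k ≤ k + 1 := by
    apply Nat.find_le
    refine ⟨by omega, ?_⟩
    by_cases h : k + 1 < A.n
    · right
      rw [relN_lt A hk h]
      exact hFR.2.2.2.1 ⟨k, hk⟩ ⟨k + 1, h⟩ (by simp [Fin.lt_def]) hl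
    · left; omega
  have := eOf_gt A k
  unfold sOf
  omega

/-- The decoration data of a matrix, extended to all natural number indices. -/
noncomputable def dOf [Nonempty Ω] (A : FMat X Ω) (i : ℕ) : X ⊕ Ω :=
  if h : i < A.n then A.dec ⟨i, h⟩ else Sum.inr (Classical.arbitrary Ω)

/-- The forest reconstructed from a matrix. -/
noncomputable def toForest [Nonempty Ω] (A : FMat X Ω) : RForest X Ω :=
  FreeMonoid.ofList (buildF (dOf A) (sOf A) 0 A.n)


lemma FMat.ext' : ∀ {A B : FMat X Ω} (hn : A.n = B.n),
    (∀ i (hi : i < A.n), A.dec ⟨i, hi⟩ = B.dec ⟨i, hn ▸ hi⟩) →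
    (∀ i j (hi : i < A.n) (hj : j < A.n),
      A.rel ⟨i, hi⟩ ⟨j, hj⟩ = B.rel ⟨i, hn ▸ hi⟩ ⟨j, hn ▸ hj⟩) → A = B
  | ⟨n, dec, rel⟩, ⟨n', dec', rel'⟩, hn, hdec, hrel => by
    dsimp only at hn
    subst hn
    simp only [FMat.mk.injEq, heq_eq_eq, true_and]
    constructor
    · funext i
      have := hdec i.1 i.2
      simpa using this
    · funext i j
      have := hrel i.1 j.1 i.2 j.2
      simpa using this

lemma Mmat_toForest [Nonempty Ω] (A : FMat X Ω) (hFR : IsFR A) : Mmat (toForest A) = A := by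
  classical
  have spec := build_spec A.n A.n (dOf A) (sOf A) 0 le_rfl
    (fun k hk => sOf_pos A (0 + k))
    (fun k hk => by rw [Nat.zero_add]; exact sOf_bound A hk)
    (fun k j hk hkj hj => by
      simp only [Nat.zero_add] at hj ⊢
      exact sOf_nest A hFR hk hkj hj)
    (fun k hk hl => by
      rw [Nat.zero_add] at hl ⊢
      apply sOf_leaf A hFR hk
      rw [dOf, dif_pos hk] at hl
      exact hl)
  set l := buildF (dOf A) (sOf A) 0 A.n with hldef
  have hlen : (subF l).length = A.n := by
    have := congrArg List.length spec.1
    simpa using this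
  have htl : FreeMonoid.toList (toForest A) = l := by
    rw [toForest, FreeMonoid.toList_ofList]
  have hnum : numV (toForest A) = A.n := by
    rw [numV_eq, htl, szF_length, hlen]
  have hsz : ∀ k, k < A.n → (szF l).getD k 0 = sOf A k := by
    intro k hk
    rw [spec.1, List.getD_eq_getElem _ _ (by simpa using hk), List.getElem_map,
      List.getElem_range, Nat.zero_add]
  have hdec : ∀ k (hk : k < A.n),
      rootDec ((subF l)[k]'(by omega)) = A.dec ⟨k, hk⟩ := by
    intro k hk
    set dflt : X ⊕ Ω := Sum.inr (Classical.arbitrary Ω) with hdflt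
    have h1 : (dcF l).getD k dflt = rootDec ((subF l)[k]'(by omega)) := by
      rw [List.getD_eq_getElem _ _ (by rw [dcF_length]; omega)]
      simp [dcF]
    have h2 : (dcF l).getD k dflt = dOf A k := by
      rw [spec.2, List.getD_eq_getElem _ _ (by simpa using hk), List.getElem_map,
        List.getElem_range, Nat.zero_add]
    rw [← h1, h2, dOf, dif_pos hk]
  have hv : vlist (toForest A) = subF l := by rw [vlist, htl]
  apply FMat.ext' (show (Mmat (toForest A)).n = A.n from hnum)
  · intro i hi
    have hi' : i < A.n := hnum ▸ hi
    show decorV (toForest A) ⟨i, hi⟩ = _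
    rw [decorV]
    have hg : (vlist (toForest A)).get ⟨i, hi⟩ = (subF l)[i]'(by omega) := by
      rw [List.get_eq_getElem]
      congr 1
    exact (congrArg rootDec hg).trans (hdec i hi')
  · intro i j hi hj
    have hi' : i < A.n := hnum ▸ hi
    have hj' : j < A.n := hnum ▸ hj
    rcases lt_trichotomy i j with hij | rfl | hij
    · refine (rel_lt (toForest A) ⟨i, hi⟩ ⟨j, hj⟩ (by exact hij)).trans ?_
      rw [rel_char A hFR hi' hj' hij]
      have hss : subSize (toForest A) ⟨i, hi⟩ = sOf A i := by
        rw [subSize_eq, htl, hsz i hi']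
      rw [hss]
    · have h1 : (Mmat (toForest A)).rel ⟨i, hi⟩ ⟨i, hj⟩ = .eq := by
        simp [Mmat]
      rw [h1]
      exact (hFR.2.1 ⟨i, hi'⟩).symm
    · have h1 : (Mmat (toForest A)).rel ⟨i, hi⟩ ⟨j, hj⟩ = .zero := by
        have hni : ¬ ((⟨i, hi⟩ : Fin (numV (toForest A))) < ⟨j, hj⟩) := by
          simp [Fin.lt_def]; omega
        have hne : ¬ ((⟨i, hi⟩ : Fin (numV (toForest A))) = ⟨j, hj⟩) := by
          simp [Fin.ext_iff]; omega
        simp [Mmat, hni, hne]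
      rw [h1]
      exact (hFR.1 ⟨i, hi'⟩ ⟨j, hj'⟩ (by exact hij)).symm

lemma toForest_Mmat [Nonempty Ω] (F : RForest X Ω) : toForest (Mmat F) = F := by
  have hs : ∀ k (hk : k < (subF (FreeMonoid.toList F)).length),
      sOf (Mmat F) (0 + k) = (subT ((subF (FreeMonoid.toList F))[k])).length := by
    intro k hk
    rw [Nat.zero_add]
    have hk' : k < numV F := hk
    have hsub : (subT ((subF (FreeMonoid.toList F))[k])).length = subSize F ⟨k, hk'⟩ := rfl
    refine Eq.trans ?_ hsub.symm
    have he : eOf (Mmat F) k = k + subSize F ⟨k, hk'⟩ := by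
      rw [eOf, Nat.find_eq_iff]
      refine ⟨⟨by have := subSize_pos F ⟨k, hk'⟩; omega, ?_⟩, ?_⟩
      · by_cases hn : k + subSize F ⟨k, hk'⟩ < numV F
        · right
          rw [relN_lt (Mmat F) hk' hn]
          refine (rel_lt F ⟨k, hk'⟩ ⟨k + subSize F ⟨k, hk'⟩, hn⟩
            (by have := subSize_pos F ⟨k, hk'⟩; exact Fin.mk_lt_mk.mpr (by omega))).trans ?_
          rw [if_neg (show ¬(k + subSize F ⟨k, hk'⟩ < k + subSize F ⟨k, hk'⟩) from by omega)]
        · left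
          have hb : k + subSize F ⟨k, hk'⟩ ≤ numV F := subSize_bound F ⟨k, hk'⟩
          show numV F ≤ _
          omega
      · rintro m hm ⟨h1, h2⟩
        have hmn : m < numV F := by
          have hb : k + subSize F ⟨k, hk'⟩ ≤ numV F := subSize_bound F ⟨k, hk'⟩
          omega
        rcases h2 with h2 | h2
        · have : (Mmat F).n = numV F := rfl
          omega
        · rw [relN_lt (Mmat F) hk' hmn] at h2
          have h3 := (rel_lt F ⟨k, hk'⟩ ⟨m, hmn⟩ (Fin.mk_lt_mk.mpr h1)).symm.trans h2
          rw [if_pos (show m < k + subSize F ⟨k, hk'⟩ from by omega)] at h3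
          simp at h3
    rw [sOf, he]
    omega
  have hd : ∀ k (hk : k < (subF (FreeMonoid.toList F)).length),
      dOf (Mmat F) (0 + k) = rootDec ((subF (FreeMonoid.toList F))[k]) := by
    intro k hk
    rw [Nat.zero_add]
    have hk' : k < numV F := hk
    rw [dOf, dif_pos (show k < (Mmat F).n from hk')]
    rfl
  have hrec := build_reconstruct (subF (FreeMonoid.toList F)).length (FreeMonoid.toList F)
    (dOf (Mmat F)) (sOf (Mmat F)) 0 le_rfl hd hs
  rw [toForest]
  rw [show (Mmat F).n = (subF (FreeMonoid.toList F)).length from rfl]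
  rw [hrec, FreeMonoid.ofList_toList]

/-- The map `F ↦ M(F)` is a bijection from the set `ℱ(X,Ω)` of decorated planar rooted
forests onto the set `FM(X,Ω)` of forest-representable matrices. -/
theorem Mmat_bijective [Nonempty Ω] :
    Set.BijOn (Mmat (X := X) (Ω := Ω)) Set.univ {A | IsFR A} := by
  refine ⟨fun F _ => isFR_Mmat F, fun F _ F' _ h => ?_, fun A hA => ?_⟩
  · rw [← toForest_Mmat F, h, toForest_Mmat]
  · exact ⟨toForest A, Set.mem_univ _, Mmat_toForest A hA⟩

end Moerdijk
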